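/- arXiv:1401.3011 — 2 statements merged into one kernel-verified Lean document; each statement's English description precedes it below -/
import Mathlib

section
/- Let pₙ(q) be the sum of q^{maj(π)} over involutions π of {1,...,n} avoiding both 321 and 312. Then pₙ(q) = p_{n−1}(q) + q^{n−1} p_{n−2}(q) for n ≥ 2, with p₀(q) = p₁(q) = 1. -/
open Finset Polynomial

/-- π is an involution. -/
def isInvolution {n : ℕ} (π : Equiv.Perm (Fin n)) : Prop := ∀ i, π (π i) = i

instance {n : ℕ} (π : Equiv.Perm (Fin n)) : Decidable (isInvolution π) := by
  unfold isInvolution; infer_instance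

/-- π avoids the pattern 321: no i < j < k with π(i) > π(j) > π(k). -/
def avoids321 {n : ℕ} (π : Equiv.Perm (Fin n)) : Prop :=
  ¬ ∃ i j k : Fin n, i < j ∧ j < k ∧ π k < π j ∧ π j < π i

instance {n : ℕ} (π : Equiv.Perm (Fin n)) : Decidable (avoids321 π) := by
  unfold avoids321; infer_instance

/-- The descent set of π, with positions 1,…,n-1 (position i is a descent when
the entry in position i exceeds the entry in position i+1; entries are 0-indexed
internally). -/
def desSet {n : ℕ} (π : Equiv.Perm (Fin n)) : Finset ℕ :=
  (Finset.Ico 1 n).filter (fun i =>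
    ∃ h : i < n, π ⟨i, h⟩ < π ⟨i - 1, Nat.lt_of_le_of_lt (Nat.sub_le i 1) h⟩)

/-- The major index: the sum of the descent positions. -/
def maj {n : ℕ} (π : Equiv.Perm (Fin n)) : ℕ := ∑ i ∈ desSet π, i

/-- π avoids the pattern 312: no i < j < k with π(j) < π(k) < π(i). -/
def avoids312 {n : ℕ} (π : Equiv.Perm (Fin n)) : Prop :=
  ¬ ∃ i j k : Fin n, i < j ∧ j < k ∧ π j < π k ∧ π k < π i

instance {n : ℕ} (π : Equiv.Perm (Fin n)) : Decidable (avoids312 π) := by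
  unfold avoids312; infer_instance

/-- pₙ(q): the maj-generating polynomial over involutions of {1,…,n} avoiding both
321 and 312. -/
noncomputable def majPoly (n : ℕ) : Polynomial ℤ :=
  ∑ π ∈ (Finset.univ : Finset (Equiv.Perm (Fin n))).filter
      (fun π => isInvolution π ∧ avoids321 π ∧ avoids312 π),
    (X : Polynomial ℤ) ^ (maj π)

/-! ### Auxiliary development -/

/-- "Good" permutations: every entry is displaced by at most 1. -/
def goodPerm {n : ℕ} (π : Equiv.Perm (Fin n)) : Prop :=
  ∀ i : Fin n, ((π i : ℕ) ≤ (i : ℕ) + 1 ∧ (i : ℕ) ≤ (π i : ℕ) + 1)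

lemma goodPerm_inv {n : ℕ} {π : Equiv.Perm (Fin n)} (h : goodPerm π) : goodPerm π⁻¹ := by
  intro i
  have := h (π⁻¹ i)
  rw [Equiv.Perm.coe_inv, Equiv.apply_symm_apply] at this
  exact ⟨this.2, this.1⟩

lemma good_W_aux {n : ℕ} {π : Equiv.Perm (Fin n)} (h : goodPerm π) :
    ∀ k, ∀ i j : Fin n, (i : ℕ) = k → (π i : ℕ) + 1 = (i : ℕ) → (j : ℕ) + 1 = (i : ℕ) → π j = i := by
  intro k
  induction k using Nat.strong_induction_on with
  | _ k IH =>
  intro i j hk hi hj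
  have hq := h j
  have h3 : (π j : ℕ) + 1 = (j : ℕ) ∨ (π j : ℕ) = (j : ℕ) ∨ (π j : ℕ) = (j : ℕ) + 1 := by omega
  rcases h3 with h3 | h3 | h3
  · have hpj : π (π j) = j := IH (j : ℕ) (by omega) j (π j) rfl h3 h3
    have hia : π i = j := Fin.ext (by omega)
    have : π j = i := π.injective (hpj.trans hia.symm)
    exfalso
    have := congrArg Fin.val this
    omega
  · exfalso
    have : π j = π i := Fin.ext (by omega)
    have := π.injective this
    have := congrArg Fin.val this
    omega
  · exact Fin.ext (by omega)

lemma good_W {n : ℕ} {π : Equiv.Perm (Fin n)} (h : goodPerm π) (i j : Fin n)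
    (hi : (π i : ℕ) + 1 = (i : ℕ)) (hj : (j : ℕ) + 1 = (i : ℕ)) : π j = i :=
  good_W_aux h (i : ℕ) i j rfl hi hj

lemma good_isInvolution {n : ℕ} {π : Equiv.Perm (Fin n)} (h : goodPerm π) : isInvolution π := by
  intro i
  have hq := h i
  have h3 : (π i : ℕ) + 1 = (i : ℕ) ∨ (π i : ℕ) = (i : ℕ) ∨ (π i : ℕ) = (i : ℕ) + 1 := by omega
  rcases h3 with h3 | h3 | h3
  · exact good_W h i (π i) h3 h3
  · have : π i = i := Fin.ext h3
    rw [this, this]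
  · have hinv := goodPerm_inv h
    have h1 : (π⁻¹ (π i) : ℕ) + 1 = ((π i : Fin n) : ℕ) := by
      rw [Equiv.Perm.coe_inv, Equiv.symm_apply_apply]; omega
    have h2 : ((i : Fin n) : ℕ) + 1 = ((π i : Fin n) : ℕ) := by omega
    have := good_W hinv (π i) i h1 h2
    have h4 := congrArg π this
    rw [Equiv.Perm.coe_inv, Equiv.apply_symm_apply] at h4
    exact h4.symm

lemma good_avoids321 {n : ℕ} {π : Equiv.Perm (Fin n)} (h : goodPerm π) : avoids321 π := by
  rintro ⟨i, j, k, hij, hjk, h1, h2⟩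
  have qi := h i; have qj := h j; have qk := h k
  have hij' : (i : ℕ) < j := hij
  have hjk' : (j : ℕ) < k := hjk
  have h1' : (π k : ℕ) < π j := h1
  have h2' : (π j : ℕ) < π i := h2
  omega

lemma good_avoids312 {n : ℕ} {π : Equiv.Perm (Fin n)} (h : goodPerm π) : avoids312 π := by
  rintro ⟨i, j, k, hij, hjk, h1, h2⟩
  have qi := h i; have qj := h j; have qk := h k
  have hij' : (i : ℕ) < j := hij
  have hjk' : (j : ℕ) < k := hjk
  have h1' : (π j : ℕ) < π k := h1
  have h2' : (π k : ℕ) < π i := h2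
  omega

lemma p_good {n : ℕ} {π : Equiv.Perm (Fin n)} (hinv : isInvolution π)
    (h321 : avoids321 π) (h312 : avoids312 π) : goodPerm π := by
  have key : ∀ i : Fin n, (π i : ℕ) ≤ (i : ℕ) + 1 := by
    intro i
    by_contra hc
    push_neg at hc
    set m := π i with hm
    have hmi : π m = i := hinv i
    have hmv : (i : ℕ) + 2 ≤ (m : ℕ) := hc
    have hjlt : (i : ℕ) + 1 < n := lt_trans (by omega) m.isLt
    set j : Fin n := ⟨(i : ℕ) + 1, hjlt⟩ with hj
    have hij : i < j := by simp [hj, Fin.lt_def]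
    have hjm : j < m := by simp [hj, Fin.lt_def]; omega
    have hji : π j ≠ i := by
      intro he
      have := π.injective (he.trans hmi.symm)
      simp [hj, Fin.ext_iff] at this
      omega
    have hjm' : π j ≠ m := by
      intro he
      have := π.injective (he.trans hm.symm)
      simp [hj, Fin.ext_iff] at this
    rcases lt_trichotomy ((π j : ℕ)) ((i : ℕ)) with hlt | heq | hgt
    · refine h312 ⟨i, j, m, hij, hjm, Fin.lt_def.mpr ?_, Fin.lt_def.mpr ?_⟩
      · rw [hmi]; exact hlt
      · rw [hmi, ← hm]; omega
    · exact hji (Fin.ext heq)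
    · rcases lt_trichotomy ((π j : ℕ)) ((m : ℕ)) with hlt2 | heq2 | hgt2
      · refine h321 ⟨i, j, m, hij, hjm, Fin.lt_def.mpr ?_, Fin.lt_def.mpr ?_⟩
        · rw [hmi]; exact hgt
        · rw [← hm]; exact hlt2
      · exact hjm' (Fin.ext heq2)
      · set t := π j with ht
        have htj : π t = j := hinv j
        have hmt : m < t := Fin.lt_def.mpr hgt2
        refine h312 ⟨j, m, t, hjm, hmt, Fin.lt_def.mpr ?_, Fin.lt_def.mpr ?_⟩
        · rw [hmi, htj]; simp [hj]
        · rw [htj, ← ht]; simp [hj]; omega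
  intro i
  refine ⟨key i, ?_⟩
  by_contra hc
  push_neg at hc
  have h2 := key (π i)
  rw [hinv i] at h2
  omega

lemma good_char {n : ℕ} (π : Equiv.Perm (Fin n)) :
    (isInvolution π ∧ avoids321 π ∧ avoids312 π) ↔ goodPerm π := by
  constructor
  · rintro ⟨h1, h2, h3⟩; exact p_good h1 h2 h3
  · intro h
    exact ⟨good_isInvolution h, good_avoids321 h, good_avoids312 h⟩

/-! ### The extension maps -/

def extA {m : ℕ} (σ : Equiv.Perm (Fin m)) : Equiv.Perm (Fin (m + 1)) where
  toFun := Fin.lastCases (Fin.last m) (fun i => (σ i).castSucc)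
  invFun := Fin.lastCases (Fin.last m) (fun i => (σ⁻¹ i).castSucc)
  left_inv := by
    intro x
    cases x using Fin.lastCases with
    | last => simp
    | cast i => simp
  right_inv := by
    intro x
    cases x using Fin.lastCases with
    | last => simp
    | cast i => simp

@[simp] lemma extA_castSucc {m : ℕ} (σ : Equiv.Perm (Fin m)) (i : Fin m) :
    extA σ i.castSucc = (σ i).castSucc := by
  simp [extA, Equiv.coe_fn_mk]

@[simp] lemma extA_last {m : ℕ} (σ : Equiv.Perm (Fin m)) :
    extA σ (Fin.last m) = Fin.last m := by
  simp [extA, Equiv.coe_fn_mk]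

lemma extA_injective {m : ℕ} : Function.Injective (extA (m := m)) := by
  intro σ τ h
  ext i
  have := congrFun (congrArg (fun (e : Equiv.Perm (Fin (m+1))) => (e : Fin (m+1) → Fin (m+1))) h) i.castSucc
  simp only [extA_castSucc] at this
  exact congrArg Fin.val (Fin.castSucc_injective _ this)

lemma goodPerm_extA {m : ℕ} (σ : Equiv.Perm (Fin m)) :
    goodPerm (extA σ) ↔ goodPerm σ := by
  constructor
  · intro h i
    have := h i.castSucc
    simpa using this
  · intro h x
    cases x using Fin.lastCases with
    | last => simp
    | cast i => have := h i; simpa using this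

lemma desSet_extA {m : ℕ} (σ : Equiv.Perm (Fin m)) : desSet (extA σ) = desSet σ := by
  ext k
  simp only [desSet, Finset.mem_filter, Finset.mem_Ico]
  constructor
  · rintro ⟨⟨hk1, hk2⟩, h, hdes⟩
    rcases Nat.lt_or_ge k m with hkm | hkm
    · refine ⟨⟨hk1, hkm⟩, hkm, ?_⟩
      have e1 : (⟨k, h⟩ : Fin (m + 1)) = (⟨k, hkm⟩ : Fin m).castSucc := rfl
      have e2 : (⟨k - 1, _⟩ : Fin (m + 1)) = (⟨k - 1, Nat.lt_of_le_of_lt (Nat.sub_le k 1) hkm⟩ : Fin m).castSucc := rfl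
      rw [e1, e2, extA_castSucc, extA_castSucc] at hdes
      exact Fin.castSucc_lt_castSucc_iff.mp hdes
    · exfalso
      have e1 : (⟨k, h⟩ : Fin (m + 1)) = Fin.last m := Fin.ext (by simp; omega)
      rw [e1, extA_last] at hdes
      exact absurd hdes (not_lt.mpr (Fin.le_last _))
  · rintro ⟨⟨hk1, hk2⟩, hh, hdes⟩
    refine ⟨⟨hk1, by omega⟩, by omega, ?_⟩
    have e1 : (⟨k, by omega⟩ : Fin (m + 1)) = (⟨k, hh⟩ : Fin m).castSucc := rfl
    have e2 : (⟨k - 1, _⟩ : Fin (m + 1)) = (⟨k - 1, Nat.lt_of_le_of_lt (Nat.sub_le k 1) hh⟩ : Fin m).castSucc := rfl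
    rw [e1, e2, extA_castSucc, extA_castSucc]
    exact Fin.castSucc_lt_castSucc_iff.mpr hdes

lemma maj_extA {m : ℕ} (σ : Equiv.Perm (Fin m)) : maj (extA σ) = maj σ := by
  simp [maj, desSet_extA]

def extB {m : ℕ} (σ : Equiv.Perm (Fin m)) : Equiv.Perm (Fin (m + 2)) :=
  Equiv.swap ((Fin.last m).castSucc) (Fin.last (m + 1)) * extA (extA σ)

lemma val_a {m : ℕ} : (((Fin.last m).castSucc : Fin (m + 2)) : ℕ) = m := rfl
lemma val_b {m : ℕ} : ((Fin.last (m + 1) : Fin (m + 2)) : ℕ) = m + 1 := rfl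

@[simp] lemma extB_castSucc {m : ℕ} (σ : Equiv.Perm (Fin m)) (i : Fin m) :
    extB σ (i.castSucc.castSucc) = (σ i).castSucc.castSucc := by
  have h1 : extA (extA σ) (i.castSucc.castSucc) = (σ i).castSucc.castSucc := by
    rw [extA_castSucc, extA_castSucc]
  show Equiv.swap ((Fin.last m).castSucc) (Fin.last (m + 1)) (extA (extA σ) (i.castSucc.castSucc)) = _
  rw [h1]
  apply Equiv.swap_apply_of_ne_of_ne
  · intro he
    have := congrArg Fin.val he
    simp [val_a] at this
    omega
  · intro he
    have := congrArg Fin.val he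
    simp [val_b] at this
    omega

@[simp] lemma extB_a {m : ℕ} (σ : Equiv.Perm (Fin m)) :
    extB σ ((Fin.last m).castSucc) = Fin.last (m + 1) := by
  have h1 : extA (extA σ) ((Fin.last m).castSucc) = (Fin.last m).castSucc := by
    rw [extA_castSucc, extA_last]
  show Equiv.swap ((Fin.last m).castSucc) (Fin.last (m + 1)) (extA (extA σ) ((Fin.last m).castSucc)) = _
  rw [h1, Equiv.swap_apply_left]

@[simp] lemma extB_b {m : ℕ} (σ : Equiv.Perm (Fin m)) :
    extB σ (Fin.last (m + 1)) = (Fin.last m).castSucc := by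
  show Equiv.swap ((Fin.last m).castSucc) (Fin.last (m + 1)) (extA (extA σ) (Fin.last (m + 1))) = _
  rw [extA_last, Equiv.swap_apply_right]

lemma extB_injective {m : ℕ} : Function.Injective (extB (m := m)) := by
  intro σ τ h
  ext i
  have := congrFun (congrArg (fun (e : Equiv.Perm (Fin (m+2))) => (e : Fin (m+2) → Fin (m+2))) h) i.castSucc.castSucc
  simp only [extB_castSucc] at this
  have := congrArg Fin.val this
  simpa using this

lemma goodPerm_extB {m : ℕ} (σ : Equiv.Perm (Fin m)) :
    goodPerm (extB σ) ↔ goodPerm σ := by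
  constructor
  · intro h i
    have := h i.castSucc.castSucc
    simpa using this
  · intro h x
    cases x using Fin.lastCases with
    | last => rw [extB_b]; constructor <;> simp [val_a, val_b] <;> omega
    | cast y =>
      cases y using Fin.lastCases with
      | last =>
        rw [show (Fin.last m).castSucc = ((Fin.last m).castSucc : Fin (m+2)) from rfl, extB_a]
        constructor <;> simp [val_a, val_b] <;> omega
      | cast i => rw [extB_castSucc]; have := h i; simpa using this

lemma desSet_mem_range {n : ℕ} {π : Equiv.Perm (Fin n)} {k : ℕ} (h : k ∈ desSet π) :
    1 ≤ k ∧ k < n := by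
  have := Finset.mem_of_mem_filter k h
  simpa using this

lemma desSet_extB {m : ℕ} (σ : Equiv.Perm (Fin m)) :
    desSet (extB σ) = insert (m + 1) (desSet σ) := by
  ext k
  simp only [desSet, Finset.mem_filter, Finset.mem_Ico, Finset.mem_insert]
  constructor
  · rintro ⟨⟨hk1, hk2⟩, h, hdes⟩
    rcases Nat.lt_or_ge k m with hkm | hkm
    · right
      refine ⟨⟨hk1, hkm⟩, hkm, ?_⟩
      have e1 : (⟨k, h⟩ : Fin (m + 2)) = (⟨k, hkm⟩ : Fin m).castSucc.castSucc := rfl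
      have e2 : (⟨k - 1, _⟩ : Fin (m + 2)) = (⟨k - 1, Nat.lt_of_le_of_lt (Nat.sub_le k 1) hkm⟩ : Fin m).castSucc.castSucc := rfl
      rw [e1, e2, extB_castSucc, extB_castSucc] at hdes
      rw [Fin.lt_def] at hdes ⊢
      simpa using hdes
    · rcases Nat.lt_or_ge k (m + 1) with hkm1 | hkm1
      · exfalso
        have e1 : (⟨k, h⟩ : Fin (m + 2)) = (Fin.last m).castSucc := Fin.ext (by simp [val_a]; omega)
        rw [e1, extB_a] at hdes
        exact absurd hdes (not_lt.mpr (Fin.le_last _))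
      · left; omega
  · rintro (hk | ⟨⟨hk1, hk2⟩, hh, hdes⟩)
    · subst hk
      refine ⟨⟨by omega, by omega⟩, by omega, ?_⟩
      have e1 : (⟨m + 1, by omega⟩ : Fin (m + 2)) = Fin.last (m + 1) := rfl
      have e2 : (⟨m + 1 - 1, _⟩ : Fin (m + 2)) = (Fin.last m).castSucc := rfl
      rw [e1, e2, extB_b, extB_a, Fin.lt_def, val_a, val_b]
      omega
    · refine ⟨⟨hk1, by omega⟩, by omega, ?_⟩
      have e1 : (⟨k, by omega⟩ : Fin (m + 2)) = (⟨k, hh⟩ : Fin m).castSucc.castSucc := rfl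
      have e2 : (⟨k - 1, _⟩ : Fin (m + 2)) = (⟨k - 1, Nat.lt_of_le_of_lt (Nat.sub_le k 1) hh⟩ : Fin m).castSucc.castSucc := rfl
      rw [e1, e2, extB_castSucc, extB_castSucc]
      rw [Fin.lt_def] at hdes ⊢
      simpa using hdes

lemma maj_extB {m : ℕ} (σ : Equiv.Perm (Fin m)) : maj (extB σ) = maj σ + (m + 1) := by
  have hnot : (m + 1) ∉ desSet σ := by
    intro hmem
    have := desSet_mem_range hmem
    omega
  rw [maj, desSet_extB, Finset.sum_insert hnot, maj]
  omega

/-! ### The two halves of the recursion as image sets -/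

lemma setA {m : ℕ} :
    ((Finset.univ : Finset (Equiv.Perm (Fin (m + 2)))).filter
        (fun π => isInvolution π ∧ avoids321 π ∧ avoids312 π)).filter
        (fun π => π (Fin.last (m + 1)) = Fin.last (m + 1)) =
      Finset.image extA ((Finset.univ : Finset (Equiv.Perm (Fin (m + 1)))).filter
        (fun π => isInvolution π ∧ avoids321 π ∧ avoids312 π)) := by
  ext π
  simp only [Finset.mem_filter, Finset.mem_image, Finset.mem_univ, true_and]
  constructor
  · rintro ⟨hP, hlast⟩
    have hgood : goodPerm π := (good_char π).mp hP
    have hinv : isInvolution π := hP.1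
    -- restriction
    have hne : ∀ i : Fin (m + 1), (π i.castSucc : ℕ) < m + 1 := by
      intro i
      have h1 : π i.castSucc ≠ Fin.last (m + 1) := by
        intro he
        have := π.injective (he.trans hlast.symm)
        exact absurd (congrArg Fin.val this) (by simp [val_b]; omega)
      have h2 : (π i.castSucc : ℕ) ≤ m + 1 := by omega
      have h3 : (π i.castSucc : ℕ) ≠ m + 1 := fun hc => h1 (Fin.ext (by rw [hc]; rfl))
      omega
    set f : Fin (m + 1) → Fin (m + 1) := fun i => ⟨(π i.castSucc : ℕ), hne i⟩ with hf
    have hff : ∀ i, f (f i) = i := by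
      intro i
      have hcast : (f i).castSucc = π i.castSucc := Fin.ext rfl
      apply Fin.ext
      show (π ((f i).castSucc) : ℕ) = (i : ℕ)
      rw [hcast, hinv i.castSucc]
      rfl
    refine ⟨⟨f, f, hff, hff⟩, (good_char _).mpr ?_, ?_⟩
    · intro i
      have := hgood i.castSucc
      simpa using this
    · apply Equiv.ext
      intro x
      cases x using Fin.lastCases with
      | last => rw [extA_last]; exact hlast.symm
      | cast i =>
        rw [extA_castSucc]
        exact Fin.ext rfl
  · rintro ⟨σ, hσ, rfl⟩
    have hgood : goodPerm σ := (good_char σ).mp hσ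
    exact ⟨(good_char _).mpr ((goodPerm_extA σ).mpr hgood), extA_last σ⟩

lemma setB {m : ℕ} :
    ((Finset.univ : Finset (Equiv.Perm (Fin (m + 2)))).filter
        (fun π => isInvolution π ∧ avoids321 π ∧ avoids312 π)).filter
        (fun π => ¬ π (Fin.last (m + 1)) = Fin.last (m + 1)) =
      Finset.image extB ((Finset.univ : Finset (Equiv.Perm (Fin m))).filter
        (fun π => isInvolution π ∧ avoids321 π ∧ avoids312 π)) := by
  ext π
  simp only [Finset.mem_filter, Finset.mem_image, Finset.mem_univ, true_and]
  constructor
  · rintro ⟨hP, hlast⟩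
    have hgood : goodPerm π := (good_char π).mp hP
    have hinv : isInvolution π := hP.1
    -- π (last) = a
    have hval : (π (Fin.last (m + 1)) : ℕ) = m := by
      have hq := hgood (Fin.last (m + 1))
      rw [val_b] at hq
      have h2 : (π (Fin.last (m + 1)) : ℕ) ≤ m + 1 := by omega
      have h3 : (π (Fin.last (m + 1)) : ℕ) ≠ m + 1 := by
        intro hc
        exact hlast (Fin.ext (by rw [hc]; rfl))
      omega
    have hlastA : π (Fin.last (m + 1)) = (Fin.last m).castSucc := Fin.ext (by rw [hval]; rfl)
    have haB : π ((Fin.last m).castSucc) = Fin.last (m + 1) := by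
      have := hinv (Fin.last (m + 1))
      rw [hlastA] at this
      exact this
    have hne : ∀ i : Fin m, (π i.castSucc.castSucc : ℕ) < m := by
      intro i
      have hq := hgood i.castSucc.castSucc
      have hiv : (i.castSucc.castSucc : Fin (m + 2)) = (⟨(i : ℕ), by omega⟩ : Fin (m + 2)) := Fin.ext rfl
      have hilt : (i : ℕ) < m := i.isLt
      have h1 : π i.castSucc.castSucc ≠ Fin.last (m + 1) := by
        intro he
        have := π.injective (he.trans haB.symm)
        have := congrArg Fin.val this
        simp [val_a] at this
        omega
      have h2 : π i.castSucc.castSucc ≠ (Fin.last m).castSucc := by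
        intro he
        have := π.injective (he.trans hlastA.symm)
        have := congrArg Fin.val this
        simp [val_b] at this
        omega
      have h3 : (π i.castSucc.castSucc : ℕ) ≤ m + 1 := by omega
      have h4 : (π i.castSucc.castSucc : ℕ) ≠ m + 1 := fun hc => h1 (Fin.ext (by rw [hc]; rfl))
      have h5 : (π i.castSucc.castSucc : ℕ) ≠ m := fun hc => h2 (Fin.ext (by rw [hc]; rfl))
      omega
    set f : Fin m → Fin m := fun i => ⟨(π i.castSucc.castSucc : ℕ), hne i⟩ with hf
    have hff : ∀ i, f (f i) = i := by
      intro i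
      have hcast : ((f i).castSucc.castSucc : Fin (m + 2)) = π i.castSucc.castSucc := Fin.ext rfl
      apply Fin.ext
      show (π ((f i).castSucc.castSucc) : ℕ) = (i : ℕ)
      rw [hcast, hinv i.castSucc.castSucc]
      rfl
    refine ⟨⟨f, f, hff, hff⟩, (good_char _).mpr ?_, ?_⟩
    · intro i
      have := hgood i.castSucc.castSucc
      simpa using this
    · apply Equiv.ext
      intro x
      cases x using Fin.lastCases with
      | last => rw [extB_b]; exact hlastA.symm
      | cast y =>
        cases y using Fin.lastCases with
        | last =>
          rw [extB_a]
          exact haB.symm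
        | cast i =>
          rw [extB_castSucc]
          exact Fin.ext rfl
  · rintro ⟨σ, hσ, rfl⟩
    have hgood : goodPerm σ := (good_char σ).mp hσ
    refine ⟨(good_char _).mpr ((goodPerm_extB σ).mpr hgood), ?_⟩
    rw [extB_b]
    intro he
    have := congrArg Fin.val he
    rw [val_a, val_b] at this
    omega

lemma maj_small {n : ℕ} (hn : n ≤ 1) (π : Equiv.Perm (Fin n)) : maj π = 0 := by
  have : desSet π = ∅ := by
    apply Finset.eq_empty_of_forall_notMem
    intro k hk
    have := desSet_mem_range hk
    omega
  simp [maj, this]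

/-- The recurrence pₙ(q) = p_{n−1}(q) + q^{n−1} p_{n−2}(q) for n ≥ 2, with
p₀(q) = p₁(q) = 1. -/
theorem majPoly_recurrence :
    majPoly 0 = 1 ∧ majPoly 1 = 1 ∧
    ∀ n : ℕ, 2 ≤ n → majPoly n = majPoly (n - 1) + X ^ (n - 1) * majPoly (n - 2) := by
  refine ⟨?_, ?_, ?_⟩
  · rw [majPoly]
    rw [Finset.filter_true_of_mem (fun π _ => (good_char π).mpr (fun i => i.elim0))]
    rw [Finset.sum_congr rfl (fun π _ => by rw [maj_small (by omega) π, pow_zero])]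
    simp
  · rw [majPoly]
    rw [Finset.filter_true_of_mem (fun π _ => (good_char π).mpr
      (fun i => by omega))]
    rw [Finset.sum_congr rfl (fun π _ => by rw [maj_small (by omega) π, pow_zero])]
    simp
  · intro n hn
    obtain ⟨m, rfl⟩ : ∃ m, n = m + 2 := ⟨n - 2, by omega⟩
    have hn1 : m + 2 - 1 = m + 1 := rfl
    have hn2 : m + 2 - 2 = m := rfl
    rw [hn1, hn2, majPoly]
    rw [← Finset.sum_filter_add_sum_filter_not _ (fun π => π (Fin.last (m + 1)) = Fin.last (m + 1))]
    rw [setA, setB]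
    rw [Finset.sum_image (fun x _ y _ h => extA_injective h),
        Finset.sum_image (fun x _ y _ h => extB_injective h)]
    have hA : ∑ σ ∈ (Finset.univ : Finset (Equiv.Perm (Fin (m + 1)))).filter
        (fun π => isInvolution π ∧ avoids321 π ∧ avoids312 π), (X : Polynomial ℤ) ^ maj (extA σ) =
        ∑ σ ∈ (Finset.univ : Finset (Equiv.Perm (Fin (m + 1)))).filter
        (fun π => isInvolution π ∧ avoids321 π ∧ avoids312 π), (X : Polynomial ℤ) ^ maj σ :=
      Finset.sum_congr rfl (fun σ _ => by rw [maj_extA])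
    have hB : ∑ σ ∈ (Finset.univ : Finset (Equiv.Perm (Fin m))).filter
        (fun π => isInvolution π ∧ avoids321 π ∧ avoids312 π), (X : Polynomial ℤ) ^ maj (extB σ) =
        ∑ σ ∈ (Finset.univ : Finset (Equiv.Perm (Fin m))).filter
        (fun π => isInvolution π ∧ avoids321 π ∧ avoids312 π),
          (X : Polynomial ℤ) ^ maj σ * X ^ (m + 1) :=
      Finset.sum_congr rfl (fun σ _ => by rw [maj_extB, pow_add])
    rw [hA, hB, majPoly, majPoly, ← Finset.sum_mul, mul_comm]
end

section
/- For every n and every set D ⊆ {1,...,n−1} with no two consecutive elements, the number of Dyck paths of length 2n whose peak set contains D equals the Catalan number C_{n−|D|}. -/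
open Finset

-- A lattice path with unit north and east steps is encoded as a list of booleans:
-- `true` is an N = (0,1) step and `false` is an E = (1,0) step.

/-- The height (#N − #E) of the path after its first t steps. -/
def ht (w : List Bool) (t : ℕ) : ℤ :=
  ((w.take t).count true : ℤ) - ((w.take t).count false : ℤ)

/-- A Dyck path prefix: a path that never goes below the diagonal y = x. -/
def IsPrefixPath (w : List Bool) : Prop := ∀ t, 0 ≤ ht w t

/-- The peak set of a path: labels (1,…,length−1) of vertices that lie in the middle
of an NE factor. -/
def peakSet (w : List Bool) : Finset ℕ :=
  (Finset.Ico 1 w.length).filter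
    (fun i => w.getD (i - 1) false = true ∧ w.getD i true = false)


open DyckStep in
def toStep : Bool → DyckStep := fun b => if b then U else D

open DyckStep in
def stepBool : DyckStep → Bool := fun s => s matches U

lemma toStep_inj : Function.Injective toStep := by
  intro a b; cases a <;> cases b <;> simp [toStep]

lemma stepBool_inj : Function.Injective stepBool := by
  intro a b; cases a <;> cases b <;> simp [stepBool]

open DyckStep in
lemma count_map_toStep_U (w : List Bool) : (w.map toStep).count U = w.count true := by
  simpa [toStep] using List.count_map_of_injective w toStep toStep_inj true

open DyckStep in
lemma count_map_toStep_D (w : List Bool) : (w.map toStep).count D = w.count false := by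
  simpa [toStep] using List.count_map_of_injective w toStep toStep_inj false

open DyckStep in
lemma count_map_stepBool_true (l : List DyckStep) :
    (l.map stepBool).count true = l.count U :=
  List.count_map_of_injective l stepBool stepBool_inj U

open DyckStep in
lemma count_map_stepBool_false (l : List DyckStep) :
    (l.map stepBool).count false = l.count D :=
  List.count_map_of_injective l stepBool stepBool_inj D

lemma count_tf (w : List Bool) : w.count true + w.count false = w.length := by
  induction w with
  | nil => simp
  | cons a l ih => cases a <;> simp [List.count_cons] <;> omega

lemma isPrefixPath_iff (w : List Bool) :
    IsPrefixPath w ↔ ∀ t, (w.take t).count false ≤ (w.take t).count true := by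
  unfold IsPrefixPath ht
  constructor <;> intro h t <;> have := h t <;> omega

open DyckStep in
lemma card_base (n : ℕ) :
    Nat.card {w : List Bool // w.length = 2 * n ∧ w.count true = n ∧ IsPrefixPath w ∧
      (∅ : Finset ℕ) ⊆ peakSet w} = catalan n := by
  rw [← DyckWord.card_dyckWord_semilength_eq_catalan n, ← Nat.card_eq_fintype_card]
  apply Nat.card_congr
  refine ⟨fun ⟨w, hlen, hcnt, hpre, _⟩ => ⟨⟨w.map toStep, ?_, ?_⟩, ?_⟩,
    fun ⟨p, hp⟩ => ⟨p.toList.map stepBool, ?_, ?_, ?_, Finset.empty_subset _⟩, ?_, ?_⟩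
  · rw [count_map_toStep_U, count_map_toStep_D]
    have := count_tf w
    omega
  · intro i
    show ((w.map toStep).take i).count D ≤ ((w.map toStep).take i).count U
    rw [← List.map_take, count_map_toStep_U, count_map_toStep_D]
    exact (isPrefixPath_iff w).mp hpre i
  · show (w.map toStep).count U = n
    rw [count_map_toStep_U]; exact hcnt
  · rw [List.length_map]
    rw [← DyckWord.two_mul_semilength_eq_length]
    congr 1
  · rw [count_map_stepBool_true]
    assumption
  · intro t
    unfold ht
    rw [← List.map_take, count_map_stepBool_true, count_map_stepBool_false]
    have := p.count_D_le_count_U t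
    omega
  · rintro ⟨w, h1, h2, h3, h4⟩
    apply Subtype.ext
    show (w.map toStep).map stepBool = w
    rw [List.map_map, show stepBool ∘ toStep = id by funext b; cases b <;> rfl, List.map_id]
  · rintro ⟨p, hp⟩
    apply Subtype.ext
    apply DyckWord.ext
    show (p.toList.map stepBool).map toStep = p.toList
    rw [List.map_map, show toStep ∘ stepBool = id by funext s; cases s <;> rfl, List.map_id]

-- height lemmas
lemma ht_append_le (a x : List Bool) (t : ℕ) (h : t ≤ a.length) :
    ht (a ++ x) t = ht a t := by
  unfold ht
  rw [List.take_append_of_le_length h]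

lemma ht_append_ge (a x : List Bool) (t : ℕ) (h : a.length ≤ t) :
    ht (a ++ x) t = ht a a.length + ht x (t - a.length) := by
  unfold ht
  rw [List.take_append, List.take_of_length_le h, List.take_length,
    List.count_append, List.count_append]
  push_cast
  ring

lemma ht_cons2 (b : List Bool) (s : ℕ) (h : 2 ≤ s) :
    ht (true :: false :: b) s = ht b (s - 2) := by
  obtain ⟨s', rfl⟩ : ∃ s', s = s' + 2 := ⟨s - 2, by omega⟩
  unfold ht
  simp [List.count_cons]

lemma ht_ins_le (a b : List Bool) (t : ℕ) (h : t ≤ a.length) :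
    ht (a ++ true :: false :: b) t = ht (a ++ b) t := by
  rw [ht_append_le _ _ _ h, ht_append_le _ _ _ h]

lemma ht_ins_mid (a b : List Bool) :
    ht (a ++ true :: false :: b) (a.length + 1) = ht a a.length + 1 := by
  rw [ht_append_ge _ _ _ (by omega), Nat.add_sub_cancel_left]
  congr 1

lemma ht_ins_ge (a b : List Bool) (t : ℕ) (h : a.length + 2 ≤ t) :
    ht (a ++ true :: false :: b) t = ht (a ++ b) (t - 2) := by
  rw [ht_append_ge _ _ _ (by omega), ht_append_ge _ _ _ (by omega),
    ht_cons2 _ _ (by omega)]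
  congr 2
  omega

lemma isPrefixPath_ins_iff (a b : List Bool) :
    IsPrefixPath (a ++ true :: false :: b) ↔ IsPrefixPath (a ++ b) := by
  constructor
  · intro h t
    rcases le_or_gt t a.length with h1 | h1
    · rw [← ht_ins_le a b t h1]; exact h t
    · have := h (t + 2)
      rwa [ht_ins_ge a b (t + 2) (by omega), Nat.add_sub_cancel] at this
  · intro h t
    rcases le_or_gt t a.length with h1 | h1
    · rw [ht_ins_le a b t h1]; exact h t
    rcases eq_or_lt_of_le (Nat.succ_le_of_lt h1) with h2 | h2
    · rw [← h2, ht_ins_mid]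
      have := h a.length
      rw [ht_append_le _ _ _ le_rfl] at this
      omega
    · rw [ht_ins_ge a b t (by omega)]
      exact h (t - 2)

-- peak lemmas
lemma mem_peakSet_append (a x y : List Bool) (e : ℕ) (he : e < a.length) :
    (e ∈ peakSet (a ++ x) ↔ e ∈ peakSet (a ++ y)) := by
  simp only [peakSet, mem_filter, mem_Ico, List.length_append]
  rw [List.getD_append _ _ _ _ (by omega : e - 1 < a.length),
    List.getD_append _ _ _ _ he,
    List.getD_append _ _ _ _ (by omega : e - 1 < a.length),
    List.getD_append _ _ _ _ he]
  constructor <;> rintro ⟨⟨h1, -⟩, h3⟩ <;> exact ⟨⟨h1, by omega⟩, h3⟩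

lemma peak_at_insert (a b : List Bool) :
    a.length + 1 ∈ peakSet (a ++ true :: false :: b) := by
  simp only [peakSet, mem_filter, mem_Ico, List.length_append, List.length_cons]
  refine ⟨⟨by omega, by omega⟩, ?_, ?_⟩
  · rw [Nat.add_sub_cancel, List.getD_append_right _ _ _ _ le_rfl, Nat.sub_self]
    rfl
  · rw [List.getD_append_right _ _ _ _ (by omega), Nat.add_sub_cancel_left]
    rfl

-- the master equivalence lemma
lemma master (n d : ℕ) (D : Finset ℕ) (a b : List Bool)
    (hal : a.length = d - 1) (h1 : 1 ≤ d) (hdn : d < n)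
    (hdD : d ∈ D) (hsmall : ∀ e ∈ D, e ≠ d → e + 1 < d) :
    ((a ++ true :: false :: b).length = 2 * n ∧
      (a ++ true :: false :: b).count true = n ∧
      IsPrefixPath (a ++ true :: false :: b) ∧
      D ⊆ peakSet (a ++ true :: false :: b)) ↔
    ((a ++ b).length = 2 * (n - 1) ∧ (a ++ b).count true = n - 1 ∧
      IsPrefixPath (a ++ b) ∧ D.erase d ⊆ peakSet (a ++ b)) := by
  apply and_congr
  · simp only [List.length_append, List.length_cons]
    omega
  apply and_congr
  · simp only [List.count_append, List.count_cons]
    simp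
    omega
  apply and_congr
  · exact isPrefixPath_ins_iff a b
  constructor
  · intro hsub e he
    have heD := Finset.mem_of_mem_erase he
    have hed : e ≠ d := Finset.ne_of_mem_erase he
    have helt : e < a.length := by have := hsmall e heD hed; omega
    exact (mem_peakSet_append a (true :: false :: b) b e helt).mp (hsub heD)
  · intro hsub e he
    by_cases hed : e = d
    · subst hed
      have : e = a.length + 1 := by omega
      rw [this]
      exact peak_at_insert a b
    · have helt : e < a.length := by have := hsmall e he hed; omega
      exact (mem_peakSet_append a (true :: false :: b) b e helt).mpr
        (hsub (Finset.mem_erase.mpr ⟨hed, he⟩))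

-- decomposition of a word with a peak at d
lemma decomp (w : List Bool) (d : ℕ) (hd : d ∈ peakSet w) :
    w = w.take (d - 1) ++ true :: false :: w.drop (d + 1) := by
  simp only [peakSet, mem_filter, mem_Ico] at hd
  obtain ⟨⟨h1, h2⟩, h3, h4⟩ := hd
  rw [List.getD_eq_getElem _ _ (by omega : d - 1 < w.length)] at h3
  rw [List.getD_eq_getElem _ _ h2] at h4
  conv_lhs => rw [← List.take_append_drop (d - 1) w]
  congr 1
  rw [List.drop_eq_getElem_cons (by omega : d - 1 < w.length), h3]
  congr 1
  have : d - 1 + 1 = d := by omega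
  rw [this, List.drop_eq_getElem_cons h2, h4]

lemma card_step (n d : ℕ) (D : Finset ℕ) (h1 : 1 ≤ d) (hdn : d < n) (hdD : d ∈ D)
    (hsmall : ∀ e ∈ D, e ≠ d → e + 1 < d) :
    Nat.card {w : List Bool // w.length = 2 * n ∧ w.count true = n ∧ IsPrefixPath w ∧
        D ⊆ peakSet w} =
    Nat.card {w : List Bool // w.length = 2 * (n - 1) ∧ w.count true = n - 1 ∧
        IsPrefixPath w ∧ D.erase d ⊆ peakSet w} := by
  apply Nat.card_congr
  refine ⟨fun x => ⟨x.1.take (d - 1) ++ x.1.drop (d + 1), ?_⟩,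
    fun y => ⟨y.1.take (d - 1) ++ true :: false :: y.1.drop (d - 1), ?_⟩, ?_, ?_⟩
  · obtain ⟨w, hw⟩ := x
    have hdp : d ∈ peakSet w := hw.2.2.2 hdD
    have hlen : d < w.length := by
      simp only [peakSet, mem_filter, mem_Ico] at hdp; exact hdp.1.2
    have hal : (w.take (d - 1)).length = d - 1 := by
      rw [List.length_take]; omega
    have hdec := decomp w d hdp
    refine (master n d D _ _ hal h1 hdn hdD hsmall).mp ?_
    rw [← hdec]
    exact hw
  · obtain ⟨v, hv⟩ := y
    have hal : (v.take (d - 1)).length = d - 1 := by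
      rw [List.length_take]
      have : d - 1 ≤ v.length := by omega
      omega
    refine (master n d D _ _ hal h1 hdn hdD hsmall).mpr ?_
    rw [List.take_append_drop]
    exact hv
  · rintro ⟨w, hw⟩
    apply Subtype.ext
    have hdp : d ∈ peakSet w := hw.2.2.2 hdD
    have hlen : d < w.length := by
      simp only [peakSet, mem_filter, mem_Ico] at hdp; exact hdp.1.2
    have hal : (w.take (d - 1)).length = d - 1 := by
      rw [List.length_take]; omega
    show (w.take (d - 1) ++ w.drop (d + 1)).take (d - 1) ++
        true :: false :: (w.take (d - 1) ++ w.drop (d + 1)).drop (d - 1) = w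
    rw [List.take_left' hal, List.drop_left' hal]
    exact (decomp w d hdp).symm
  · rintro ⟨v, hv⟩
    apply Subtype.ext
    have hvlen : d - 1 ≤ v.length := by omega
    have hal : (v.take (d - 1)).length = d - 1 := by
      rw [List.length_take]; omega
    show (v.take (d - 1) ++ true :: false :: v.drop (d - 1)).take (d - 1) ++
        (v.take (d - 1) ++ true :: false :: v.drop (d - 1)).drop (d + 1) = v
    rw [List.take_left' hal]
    have hdrop : (v.take (d - 1) ++ true :: false :: v.drop (d - 1)).drop (d + 1)
        = v.drop (d - 1) := by
      have : d + 1 = (v.take (d - 1)).length + 2 := by omega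
      rw [this, List.drop_append]
      rw [List.drop_of_length_le (by omega), Nat.add_sub_cancel_left]
      rfl
    rw [hdrop, List.take_append_drop]

lemma card_aux : ∀ (k n : ℕ) (D : Finset ℕ), D.card = k → D ⊆ Finset.Ico 1 n →
    (∀ i ∈ D, i + 1 ∉ D) →
    Nat.card {w : List Bool // w.length = 2 * n ∧ w.count true = n ∧ IsPrefixPath w ∧
      D ⊆ peakSet w} = catalan (n - k) := by
  intro k
  induction k with
  | zero =>
    intro n D hcard _ _
    rw [Finset.card_eq_zero] at hcard
    subst hcard
    rw [Nat.sub_zero]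
    exact card_base n
  | succ k ih =>
    intro n D hcard hD hnc
    have hne : D.Nonempty := Finset.card_pos.mp (by omega)
    set d := D.max' hne with hd
    have hdD : d ∈ D := D.max'_mem hne
    have hd1 : 1 ≤ d := (Finset.mem_Ico.mp (hD hdD)).1
    have hdn : d < n := (Finset.mem_Ico.mp (hD hdD)).2
    have hsmall : ∀ e ∈ D, e ≠ d → e + 1 < d := by
      intro e he hed
      have h1 : e ≤ d := D.le_max' e he
      have h2 : e + 1 ≠ d := fun h => hnc e he (h ▸ hdD)
      omega
    rw [card_step n d D hd1 hdn hdD hsmall]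
    rw [ih (n - 1) (D.erase d) (by rw [Finset.card_erase_of_mem hdD, hcard]; omega) ?_ ?_]
    · congr 1
      omega
    · intro e he
      have heD := Finset.mem_of_mem_erase he
      have h1 := (Finset.mem_Ico.mp (hD heD)).1
      have h2 := hsmall e heD (Finset.ne_of_mem_erase he)
      rw [Finset.mem_Ico]
      omega
    · intro i hi
      intro hcon
      exact hnc i (Finset.mem_of_mem_erase hi) (Finset.mem_of_mem_erase hcon)

/-- For D ⊆ {1,…,n−1} with no two consecutive elements, the number of Dyck paths of
length 2n whose peak set contains D is the Catalan number C_{n−|D|}. -/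
theorem count_dyck_paths_peaks_containing (n : ℕ) (D : Finset ℕ)
    (hD : D ⊆ Finset.Ico 1 n) (hnc : ∀ i ∈ D, i + 1 ∉ D) :
    Nat.card {w : List Bool //
        w.length = 2 * n ∧ w.count true = n ∧ IsPrefixPath w ∧ D ⊆ peakSet w} =
    catalan (n - D.card) := by
  exact card_aux D.card n D rfl hD hnc
end
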